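/- Let Λ ⊂ {1,…,N} and suppose x̃ ∈ ℝ^N with supp(x̃) ∩ Λ = ∅. Define h = A_Λᵀ A_Λ x̃. If the M×N real matrix Φ satisfies the RIP of order ‖x̃‖₀ + |Λ| + 1 with isometry constant δ, then |h(j) − x̃(j)| ≤ (δ/(1−δ))‖x̃‖₂ for all j ∉ Λ. -/

import Mathlib

noncomputable section

namespace OMP

open Matrix Finset

/-- The support of a vector, as a `Finset`. -/
def supp {n : ℕ} (x : Fin n → ℝ) : Finset (Fin n) :=
  Finset.univ.filter fun j => x j ≠ 0

/-- The Euclidean (ℓ²) norm of a vector. -/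
def l2 {n : ℕ} (x : Fin n → ℝ) : ℝ := Real.sqrt (∑ j, x j ^ 2)

/-- The ℓ^∞ norm of a vector. -/
def linf {n : ℕ} (x : Fin n → ℝ) : ℝ := ⨆ j, |x j|

/-- The standard inner product of two vectors. -/
def dotp {n : ℕ} (x y : Fin n → ℝ) : ℝ := ∑ j, x j * y j

/-- The restriction of a vector to a set of indices (zero elsewhere). -/
def restr {n : ℕ} (Γ : Finset (Fin n)) (x : Fin n → ℝ) : Fin n → ℝ :=
  fun j => if j ∈ Γ then x j else 0

/-- The restricted isometry property of order `K` with isometry constant `δ`. -/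
def RIP {M N : ℕ} (K : ℕ) (Φ : Matrix (Fin M) (Fin N) ℝ) (δ : ℝ) : Prop :=
  0 < δ ∧ δ < 1 ∧ ∀ x : Fin N → ℝ, (supp x).card ≤ K →
    (1 - δ) * l2 x ^ 2 ≤ l2 (Φ.mulVec x) ^ 2 ∧
      l2 (Φ.mulVec x) ^ 2 ≤ (1 + δ) * l2 x ^ 2

/-- The span of the columns of `Φ` indexed by `Λ`, as a submodule of Euclidean space. -/
def colSpan {M N : ℕ} (Φ : Matrix (Fin M) (Fin N) ℝ) (Λ : Finset (Fin N)) :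
    Submodule ℝ (EuclideanSpace ℝ (Fin M)) :=
  Submodule.span ℝ ((fun j => (WithLp.equiv 2 (Fin M → ℝ)).symm fun i => Φ i j) '' (Λ : Set (Fin N)))

/-- Orthogonal projection `P_Λ` onto the span of the columns of `Φ` indexed by `Λ`. -/
def projCol {M N : ℕ} (Φ : Matrix (Fin M) (Fin N) ℝ) (Λ : Finset (Fin N))
    (v : Fin M → ℝ) : Fin M → ℝ :=
  WithLp.equiv 2 (Fin M → ℝ)
    ((colSpan Φ Λ).orthogonalProjection ((WithLp.equiv 2 (Fin M → ℝ)).symm v) : EuclideanSpace ℝ (Fin M))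

/-- The matrix `A_Λ = (I - P_Λ) Φ`: the columns of `Φ` orthogonalized against `colSpan Φ Λ`. -/
def Amat {M N : ℕ} (Φ : Matrix (Fin M) (Fin N) ℝ) (Λ : Finset (Fin N)) :
    Matrix (Fin M) (Fin N) ℝ :=
  Matrix.of fun i j => Φ i j - projCol Φ Λ (fun i' => Φ i' j) i

variable {n : ℕ}

lemma l2_nonneg (x : Fin n → ℝ) : 0 ≤ l2 x := Real.sqrt_nonneg _

lemma l2_sq (x : Fin n → ℝ) : l2 x ^ 2 = ∑ j, x j ^ 2 := by
  rw [l2, Real.sq_sqrt]; positivity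

lemma l2_eq_zero {x : Fin n → ℝ} (hx : l2 x = 0) : x = 0 := by
  have h : ∑ j, x j ^ 2 = 0 := by rw [← l2_sq, hx]; ring
  funext j
  have := (Finset.sum_eq_zero_iff_of_nonneg (fun i _ => sq_nonneg (x i))).1 h j (mem_univ j)
  exact pow_eq_zero_iff (two_ne_zero) |>.1 this

lemma dotp_self (x : Fin n → ℝ) : dotp x x = l2 x ^ 2 := by
  rw [l2_sq, dotp]
  exact Finset.sum_congr rfl fun j _ => (sq (x j)).symm

lemma l2_add_sq (x y : Fin n → ℝ) :
    l2 (x + y) ^ 2 = l2 x ^ 2 + 2 * dotp x y + l2 y ^ 2 := by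
  have h : ∀ j, (x j + y j) ^ 2 = x j ^ 2 + 2 * (x j * y j) + y j ^ 2 := fun j => by ring
  simp only [l2_sq, dotp, Pi.add_apply, h, Finset.sum_add_distrib, Finset.mul_sum]

lemma l2_smul_sq (c : ℝ) (x : Fin n → ℝ) : l2 (c • x) ^ 2 = c ^ 2 * l2 x ^ 2 := by
  simp only [l2_sq, Pi.smul_apply, smul_eq_mul, mul_pow, ← Finset.mul_sum]

lemma dotp_smul_left (c : ℝ) (x y : Fin n → ℝ) : dotp (c • x) y = c * dotp x y := by
  simp only [dotp, Pi.smul_apply, smul_eq_mul, Finset.mul_sum, mul_assoc]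

lemma dotp_smul_right (c : ℝ) (x y : Fin n → ℝ) : dotp x (c • y) = c * dotp x y := by
  simp only [dotp, Pi.smul_apply, smul_eq_mul, Finset.mul_sum]
  exact Finset.sum_congr rfl fun j _ => by ring

lemma l2_sub_sq (x y : Fin n → ℝ) :
    l2 (x - y) ^ 2 = l2 x ^ 2 - 2 * dotp x y + l2 y ^ 2 := by
  have h1 : x - y = x + (-1 : ℝ) • y := by funext j; simp [sub_eq_add_neg]
  rw [h1, l2_add_sq, dotp_smul_right, l2_smul_sq]
  ring

lemma dotp_add_left (x y z : Fin n → ℝ) : dotp (x + y) z = dotp x z + dotp y z := by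
  simp only [dotp, Pi.add_apply, add_mul, Finset.sum_add_distrib]

lemma mem_supp {x : Fin n → ℝ} {j : Fin n} : j ∈ supp x ↔ x j ≠ 0 := by simp [supp]

lemma supp_add_subset (x y : Fin n → ℝ) : supp (x + y) ⊆ supp x ∪ supp y := by
  intro j hj
  rw [mem_supp] at hj
  by_contra hc
  simp only [mem_union, mem_supp, not_or, not_not] at hc
  exact hj (by simp [hc.1, hc.2])

lemma supp_sub_subset (x y : Fin n → ℝ) : supp (x - y) ⊆ supp x ∪ supp y := by
  intro j hj
  rw [mem_supp] at hj
  by_contra hc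
  simp only [mem_union, mem_supp, not_or, not_not] at hc
  exact hj (by simp [hc.1, hc.2])

lemma supp_smul_subset (c : ℝ) (x : Fin n → ℝ) : supp (c • x) ⊆ supp x := by
  intro j hj
  rw [mem_supp] at hj ⊢
  intro h; exact hj (by simp [h])

lemma dotp_eq_zero_of_disjoint {x y : Fin n → ℝ} {Γ Λ : Finset (Fin n)}
    (hx : supp x ⊆ Γ) (hy : supp y ⊆ Λ) (hd : Γ ∩ Λ = ∅) : dotp x y = 0 := by
  apply Finset.sum_eq_zero
  intro j _
  by_cases hxj : x j = 0
  · simp [hxj]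
  by_cases hyj : y j = 0
  · simp [hyj]
  exfalso
  have : j ∈ Γ ∩ Λ := mem_inter.2 ⟨hx (mem_supp.2 hxj), hy (mem_supp.2 hyj)⟩
  simp [hd] at this





variable {M N : ℕ}

/-- `projCol` as a linear map. -/
def projL (Φ : Matrix (Fin M) (Fin N) ℝ) (Λ : Finset (Fin N)) :
    (Fin M → ℝ) →ₗ[ℝ] (Fin M → ℝ) :=
  (WithLp.linearEquiv 2 ℝ (Fin M → ℝ)).toLinearMap ∘ₗ
    ((colSpan Φ Λ).subtype ∘ₗ (colSpan Φ Λ).orthogonalProjection.toLinearMap) ∘ₗ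
      (WithLp.linearEquiv 2 ℝ (Fin M → ℝ)).symm.toLinearMap

lemma projL_apply (Φ : Matrix (Fin M) (Fin N) ℝ) (Λ : Finset (Fin N)) (v : Fin M → ℝ) :
    projL Φ Λ v = projCol Φ Λ v := rfl

lemma dotp_eq_inner (a b : Fin M → ℝ) :
    dotp a b = inner ℝ ((WithLp.equiv 2 (Fin M → ℝ)).symm a)
      ((WithLp.equiv 2 (Fin M → ℝ)).symm b) := by
  simp [dotp, PiLp.inner_apply, RCLike.inner_apply, mul_comm]

lemma Amat_mulVec (Φ : Matrix (Fin M) (Fin N) ℝ) (Λ : Finset (Fin N)) (x : Fin N → ℝ) :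
    (Amat Φ Λ).mulVec x = Φ.mulVec x - projCol Φ Λ (Φ.mulVec x) := by
  have hmv : Φ.mulVec x = ∑ j, x j • (fun i => Φ i j) := by
    funext i
    simp [Matrix.mulVec, dotProduct, Finset.sum_apply, mul_comm]
  have h1 : projCol Φ Λ (Φ.mulVec x) = ∑ j, x j • projCol Φ Λ (fun i => Φ i j) := by
    rw [← projL_apply]
    conv_lhs => rw [hmv]
    rw [map_sum]
    exact Finset.sum_congr rfl fun j _ => by rw [_root_.map_smul, projL_apply]
  funext i
  simp only [Pi.sub_apply, h1, Finset.sum_apply, Pi.smul_apply, smul_eq_mul]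
  simp only [Matrix.mulVec, dotProduct, Amat, Matrix.of_apply]
  rw [← Finset.sum_sub_distrib]
  exact Finset.sum_congr rfl fun j _ => by ring

lemma dotp_proj_orth (Φ : Matrix (Fin M) (Fin N) ℝ) (Λ : Finset (Fin N)) (v : Fin M → ℝ) :
    dotp (v - projCol Φ Λ v) (projCol Φ Λ v) = 0 := by
  rw [dotp_eq_inner]
  have h1 : (WithLp.equiv 2 (Fin M → ℝ)).symm (projCol Φ Λ v) =
      (((colSpan Φ Λ).orthogonalProjection ((WithLp.equiv 2 (Fin M → ℝ)).symm v)) :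
        EuclideanSpace ℝ (Fin M)) := by
    simp [projCol]
  have h2 : (WithLp.equiv 2 (Fin M → ℝ)).symm (v - projCol Φ Λ v) =
      (WithLp.equiv 2 (Fin M → ℝ)).symm v -
        (((colSpan Φ Λ).orthogonalProjection ((WithLp.equiv 2 (Fin M → ℝ)).symm v)) :
          EuclideanSpace ℝ (Fin M)) := by
    rw [← h1]; simp
  rw [h1, h2]
  have hmem := Submodule.sub_starProjection_mem_orthogonal
    (K := colSpan Φ Λ) ((WithLp.equiv 2 (Fin M → ℝ)).symm v)
  exact (Submodule.mem_orthogonal' _ _).1 hmem _ (SetLike.coe_mem _)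

lemma l2_sub_proj (Φ : Matrix (Fin M) (Fin N) ℝ) (Λ : Finset (Fin N)) (v : Fin M → ℝ) :
    l2 (v - projCol Φ Λ v) ^ 2 = l2 v ^ 2 - l2 (projCol Φ Λ v) ^ 2 := by
  have h := l2_add_sq (v - projCol Φ Λ v) (projCol Φ Λ v)
  rw [sub_add_cancel, dotp_proj_orth] at h
  linarith

lemma dotp_v_proj (Φ : Matrix (Fin M) (Fin N) ℝ) (Λ : Finset (Fin N)) (v : Fin M → ℝ) :
    dotp v (projCol Φ Λ v) = l2 (projCol Φ Λ v) ^ 2 := by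
  have h := dotp_add_left (v - projCol Φ Λ v) (projCol Φ Λ v) (projCol Φ Λ v)
  rw [sub_add_cancel, dotp_proj_orth, dotp_self] at h
  linarith

lemma exists_rep (Φ : Matrix (Fin M) (Fin N) ℝ) (Λ : Finset (Fin N))
    {u : EuclideanSpace ℝ (Fin M)} (hu : u ∈ colSpan Φ Λ) :
    ∃ w : Fin N → ℝ, supp w ⊆ Λ ∧ (WithLp.equiv 2 (Fin M → ℝ)).symm (Φ.mulVec w) = u := by
  induction hu using Submodule.span_induction with
  | mem z hz =>
    obtain ⟨j, hj, rfl⟩ := hz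
    refine ⟨fun k => if k = j then 1 else 0, ?_, ?_⟩
    · intro k hk
      rw [mem_supp] at hk
      by_cases h : k = j
      · subst h; exact hj
      · simp [h] at hk
    · congr 1
      funext i
      simp [Matrix.mulVec, dotProduct]
  | zero => exact ⟨0, by intro k hk; rw [mem_supp] at hk; simp at hk, by rw [Matrix.mulVec_zero]; simp⟩
  | add a b _ _ iha ihb =>
    obtain ⟨w1, hw1, hww1⟩ := iha
    obtain ⟨w2, hw2, hww2⟩ := ihb
    refine ⟨w1 + w2, subset_trans (supp_add_subset w1 w2) (Finset.union_subset hw1 hw2), ?_⟩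
    rw [Matrix.mulVec_add, ← hww1, ← hww2]
    simp
  | smul c a _ iha =>
    obtain ⟨w, hw, hww⟩ := iha
    refine ⟨c • w, subset_trans (supp_smul_subset c w) hw, ?_⟩
    rw [Matrix.mulVec_smul, ← hww]
    simp



lemma approx_inner_half (B : Matrix (Fin M) (Fin N) ℝ) (c : ℝ) (Γ : Finset (Fin N))
    (hiso : ∀ y : Fin N → ℝ, supp y ⊆ Γ →
      (1 - c) * l2 y ^ 2 ≤ l2 (B.mulVec y) ^ 2 ∧ l2 (B.mulVec y) ^ 2 ≤ (1 + c) * l2 y ^ 2)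
    (u v : Fin N → ℝ) (hu : supp u ⊆ Γ) (hv : supp v ⊆ Γ) :
    |dotp (B.mulVec u) (B.mulVec v) - dotp u v| ≤ c * (l2 u ^ 2 + l2 v ^ 2) / 2 := by
  have h1 := hiso (u + v) (subset_trans (supp_add_subset u v) (Finset.union_subset hu hv))
  have h2 := hiso (u - v) (subset_trans (supp_sub_subset u v) (Finset.union_subset hu hv))
  have e1 : dotp (B.mulVec u) (B.mulVec v) =
      (l2 (B.mulVec (u + v)) ^ 2 - l2 (B.mulVec (u - v)) ^ 2) / 4 := by
    rw [Matrix.mulVec_add, Matrix.mulVec_sub]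
    have ha := l2_add_sq (B.mulVec u) (B.mulVec v)
    have hb := l2_sub_sq (B.mulVec u) (B.mulVec v)
    linarith
  have e2 : dotp u v = (l2 (u + v) ^ 2 - l2 (u - v) ^ 2) / 4 := by
    have ha := l2_add_sq u v
    have hb := l2_sub_sq u v
    linarith
  have hpar : l2 (u + v) ^ 2 + l2 (u - v) ^ 2 = 2 * (l2 u ^ 2 + l2 v ^ 2) := by
    have ha := l2_add_sq u v
    have hb := l2_sub_sq u v
    linarith
  have hcpar : c * (l2 (u + v) ^ 2 + l2 (u - v) ^ 2) = c * (2 * (l2 u ^ 2 + l2 v ^ 2)) := by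
    rw [hpar]
  rw [abs_le]
  constructor <;> nlinarith [h1.1, h1.2, h2.1, h2.2, hcpar]

lemma approx_inner (B : Matrix (Fin M) (Fin N) ℝ) (c : ℝ) (hc : 0 ≤ c) (Γ : Finset (Fin N))
    (hiso : ∀ y : Fin N → ℝ, supp y ⊆ Γ →
      (1 - c) * l2 y ^ 2 ≤ l2 (B.mulVec y) ^ 2 ∧ l2 (B.mulVec y) ^ 2 ≤ (1 + c) * l2 y ^ 2)
    (u v : Fin N → ℝ) (hu : supp u ⊆ Γ) (hv : supp v ⊆ Γ) :
    |dotp (B.mulVec u) (B.mulVec v) - dotp u v| ≤ c * l2 u * l2 v := by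
  by_cases hu0 : l2 u = 0
  · have : u = 0 := l2_eq_zero hu0
    subst this
    simp [dotp, Matrix.mulVec_zero, hu0]
  by_cases hv0 : l2 v = 0
  · have : v = 0 := l2_eq_zero hv0
    subst this
    simp [dotp, Matrix.mulVec_zero, hv0]
  have hu' : 0 < l2 u := lt_of_le_of_ne (l2_nonneg u) (Ne.symm hu0)
  have hv' : 0 < l2 v := lt_of_le_of_ne (l2_nonneg v) (Ne.symm hv0)
  set s : ℝ := Real.sqrt (l2 v / l2 u) with hs_def
  have hs : 0 < s := Real.sqrt_pos.2 (div_pos hv' hu')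
  have hs2 : s ^ 2 = l2 v / l2 u := Real.sq_sqrt (le_of_lt (div_pos hv' hu'))
  have key := approx_inner_half B c Γ hiso (s • u) (s⁻¹ • v)
    (subset_trans (supp_smul_subset s u) hu) (subset_trans (supp_smul_subset s⁻¹ v) hv)
  have hd1 : dotp (B.mulVec (s • u)) (B.mulVec (s⁻¹ • v)) =
      dotp (B.mulVec u) (B.mulVec v) := by
    rw [Matrix.mulVec_smul, Matrix.mulVec_smul, dotp_smul_left, dotp_smul_right,
      ← mul_assoc, mul_inv_cancel₀ hs.ne', one_mul]
  have hd2 : dotp (s • u) (s⁻¹ • v) = dotp u v := by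
    rw [dotp_smul_left, dotp_smul_right, ← mul_assoc, mul_inv_cancel₀ hs.ne', one_mul]
  have hl1 : l2 (s • u) ^ 2 = l2 u * l2 v := by
    rw [l2_smul_sq, hs2]
    field_simp
  have hl2 : l2 (s⁻¹ • v) ^ 2 = l2 u * l2 v := by
    rw [l2_smul_sq, inv_pow, hs2]
    field_simp
  rw [hd1, hd2, hl1, hl2] at key
  calc |dotp (B.mulVec u) (B.mulVec v) - dotp u v| ≤ c * (l2 u * l2 v + l2 u * l2 v) / 2 := key
    _ = c * l2 u * l2 v := by ring

/-- Modified RIP for `Amat`. -/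
lemma ARIP (Φ : Matrix (Fin M) (Fin N) ℝ) (δ : ℝ) (Λ : Finset (Fin N)) (K : ℕ)
    (hRIP : RIP K Φ δ) (Γ : Finset (Fin N)) (hΓΛ : Γ ∩ Λ = ∅)
    (hcard : Γ.card + Λ.card ≤ K) :
    ∀ x : Fin N → ℝ, supp x ⊆ Γ →
      (1 - δ / (1 - δ)) * l2 x ^ 2 ≤ l2 ((Amat Φ Λ).mulVec x) ^ 2 ∧
        l2 ((Amat Φ Λ).mulVec x) ^ 2 ≤ (1 + δ / (1 - δ)) * l2 x ^ 2 := by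
  obtain ⟨hδ0, hδ1, hrip⟩ := hRIP
  have h1δ : 0 < 1 - δ := by linarith
  intro x hx
  set v := Φ.mulVec x with hv_def
  set Pv := projCol Φ Λ v with hPv_def
  have hAx : (Amat Φ Λ).mulVec x = v - Pv := Amat_mulVec Φ Λ x
  have hxcard : (supp x).card ≤ K :=
    le_trans (card_le_card hx) (by omega)
  have hRx := hrip x hxcard
  -- representation of the projection
  have hmem : (WithLp.equiv 2 (Fin M → ℝ)).symm Pv ∈ colSpan Φ Λ := by
    have : (WithLp.equiv 2 (Fin M → ℝ)).symm Pv =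
        (((colSpan Φ Λ).orthogonalProjection ((WithLp.equiv 2 (Fin M → ℝ)).symm v)) :
          EuclideanSpace ℝ (Fin M)) := by
      simp [hPv_def, projCol]
    rw [this]
    exact SetLike.coe_mem _
  obtain ⟨w, hwΛ, hww⟩ := exists_rep Φ Λ hmem
  have hΦw : Φ.mulVec w = Pv := by
    have := congrArg (WithLp.equiv 2 (Fin M → ℝ)) hww
    simpa using this
  have hwcard : (supp w).card ≤ K := le_trans (card_le_card hwΛ) (by omega)
  have hRw := hrip w hwcard
  -- inner product bound for Φ on Γ ∪ Λ
  have hΦiso : ∀ y : Fin N → ℝ, supp y ⊆ Γ ∪ Λ →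
      (1 - δ) * l2 y ^ 2 ≤ l2 (Φ.mulVec y) ^ 2 ∧ l2 (Φ.mulVec y) ^ 2 ≤ (1 + δ) * l2 y ^ 2 :=
    fun y hy => hrip y (le_trans (card_le_card hy) (le_trans (card_union_le _ _) hcard))
  have hinner := approx_inner Φ δ hδ0.le (Γ ∪ Λ) hΦiso x w
    (subset_trans hx subset_union_left) (subset_trans hwΛ subset_union_right)
  have hxw : dotp x w = 0 := dotp_eq_zero_of_disjoint hx hwΛ hΓΛ
  rw [hxw, sub_zero, hΦw] at hinner
  have hdvp : dotp v Pv = l2 Pv ^ 2 := dotp_v_proj Φ Λ v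
  -- from hinner : |dotp v Pv| ≤ δ * l2 x * l2 w, so l2 Pv ^2 ≤ δ l2 x l2 w
  have hPvbound : l2 Pv ^ 2 ≤ δ * l2 x * l2 w := by
    have := abs_le.1 hinner
    linarith [this.2, hdvp.ge, hdvp.le]
  -- l2 Pv ^2 = l2 (Φ w)^2 ≥ (1-δ) l2 w ^2
  have hlow : (1 - δ) * l2 w ^ 2 ≤ l2 Pv ^ 2 := by rw [← hΦw]; exact hRw.1
  have hwbound : l2 w ≤ δ / (1 - δ) * l2 x := by
    by_cases hw0 : l2 w = 0
    · rw [hw0]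
      exact mul_nonneg (div_nonneg hδ0.le h1δ.le) (l2_nonneg x)
    have hw' : 0 < l2 w := lt_of_le_of_ne (l2_nonneg w) (Ne.symm hw0)
    rw [div_mul_eq_mul_div, le_div_iff₀ h1δ]
    nlinarith
  have hPv2 : l2 Pv ^ 2 ≤ δ ^ 2 / (1 - δ) * l2 x ^ 2 := by
    calc l2 Pv ^ 2 ≤ δ * l2 x * l2 w := hPvbound
      _ ≤ δ * l2 x * (δ / (1 - δ) * l2 x) := by
          exact mul_le_mul_of_nonneg_left hwbound (mul_nonneg hδ0.le (l2_nonneg x))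
      _ = δ ^ 2 / (1 - δ) * l2 x ^ 2 := by ring
  have hpyth : l2 ((Amat Φ Λ).mulVec x) ^ 2 = l2 v ^ 2 - l2 Pv ^ 2 := by
    rw [hAx]; exact l2_sub_proj Φ Λ v
  constructor
  · rw [hpyth]
    have h1 : (1 - δ) * l2 x ^ 2 ≤ l2 v ^ 2 := hRx.1
    have key : (1 - δ / (1 - δ)) * l2 x ^ 2 =
        (1 - δ) * l2 x ^ 2 - δ ^ 2 / (1 - δ) * l2 x ^ 2 := by
      field_simp
      ring
    linarith
  · rw [hpyth]
    have h2 : l2 v ^ 2 ≤ (1 + δ) * l2 x ^ 2 := hRx.2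
    have hPvnn : 0 ≤ l2 Pv ^ 2 := sq_nonneg _
    have hδδ : δ ≤ δ / (1 - δ) := by
      rw [le_div_iff₀ h1δ]
      nlinarith
    nlinarith [sq_nonneg (l2 x)]



/-- bound on the entries of `h = A_Λᵀ A_Λ x̃`. -/
theorem stmt3 {M N : ℕ} (Φ : Matrix (Fin M) (Fin N) ℝ) (δ : ℝ) (Λ : Finset (Fin N))
    (xt : Fin N → ℝ) (hdisj : supp xt ∩ Λ = ∅)
    (h : Fin N → ℝ) (hh : h = (Amat Φ Λ)ᵀ.mulVec ((Amat Φ Λ).mulVec xt))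
    (hRIP : RIP ((supp xt).card + Λ.card + 1) Φ δ) :
    ∀ j ∉ Λ, |h j - xt j| ≤ δ / (1 - δ) * l2 xt := by
  intro j hj
  have hδ0 := hRIP.1
  have hδ1 := hRIP.2.1
  have h1δ : 0 < 1 - δ := by linarith
  set Γ : Finset (Fin N) := insert j (supp xt) with hΓ_def
  have hΓΛ : Γ ∩ Λ = ∅ := by
    rw [Finset.eq_empty_iff_forall_notMem]
    intro k hk
    rw [Finset.mem_inter, hΓ_def, Finset.mem_insert] at hk
    rcases hk.1 with rfl | hmem
    · exact hj hk.2
    · have : k ∈ supp xt ∩ Λ := Finset.mem_inter.2 ⟨hmem, hk.2⟩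
      rw [hdisj] at this
      simp at this
  have hcard : Γ.card + Λ.card ≤ (supp xt).card + Λ.card + 1 := by
    rw [hΓ_def]
    have := Finset.card_insert_le j (supp xt)
    omega
  have hiso := ARIP Φ δ Λ _ hRIP Γ hΓΛ hcard
  have hc : 0 ≤ δ / (1 - δ) := div_nonneg hδ0.le h1δ.le
  set e : Fin N → ℝ := fun k => if k = j then 1 else 0 with he_def
  have he : supp e ⊆ Γ := by
    intro k hk
    rw [mem_supp, he_def] at hk
    by_cases hkj : k = j
    · subst hkj; exact Finset.mem_insert_self _ _
    · simp [hkj] at hk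
  have hxtΓ : supp xt ⊆ Γ := Finset.subset_insert _ _
  have hbound := approx_inner (Amat Φ Λ) (δ / (1 - δ)) hc Γ hiso e xt he hxtΓ
  have hhj : dotp ((Amat Φ Λ).mulVec e) ((Amat Φ Λ).mulVec xt) = h j := by
    have hAe : (Amat Φ Λ).mulVec e = fun i => Amat Φ Λ i j := by
      funext i
      simp [Matrix.mulVec, dotProduct, he_def]
    rw [hAe, hh]
    simp only [dotp, Matrix.mulVec, dotProduct, Matrix.transpose_apply]
  have hdot : dotp e xt = xt j := by
    simp [dotp, he_def, ite_mul]
  have hl2e : l2 e = 1 := by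
    rw [l2]
    have : ∀ k, e k ^ 2 = if k = j then (1:ℝ) else 0 := by
      intro k
      rw [he_def]
      by_cases hkj : k = j <;> simp [hkj]
    simp only [this, Finset.sum_ite_eq', Finset.mem_univ, if_true]
    exact Real.sqrt_one
  rw [hhj, hdot, hl2e] at hbound
  calc |h j - xt j| ≤ δ / (1 - δ) * 1 * l2 xt := hbound
    _ = δ / (1 - δ) * l2 xt := by ring


end OMP
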